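/- arXiv:2305.06952 — 3 statements merged into one kernel-verified Lean document; each statement's English description precedes it below -/
import Mathlib

section
/- Let Γ be a δ-hyperbolic graph with basepoint 1, and let r, s : ℕ → Γ be geodesic rays (maps with d(1, r(n)) = d(1, r(0)) + n for all n, and consecutive vertices adjacent; similarly for s) with d(1,r(0)) = d(1,s(0)) and r(0) = s(0) = 1. If the sequence d(r(n), s(n)) is bounded, then d(r(n), s(n)) ≤ 2δ for all n ∈ ℕ. -/
/-- `p` is a geodesic segment of length `n` in the graph `G`. -/
def IsGeodesicSeg {V : Type*} (G : SimpleGraph V) (n : ℕ) (p : ℕ → V) : Prop :=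
  (∀ i < n, G.Adj (p i) (p (i + 1))) ∧
  ∀ i j : ℕ, i ≤ j → j ≤ n → G.dist (p i) (p j) = j - i

/-- `G` has `δ`-thin triangles: given any three vertices and any geodesic
segments joining them pairwise, every point of `[x,z]` lies within distance `δ`
of `[x,y] ∪ [y,z]`. -/
def ThinTriangles {V : Type*} (G : SimpleGraph V) (δ : ℕ) : Prop :=
  ∀ (x y z : V) (nxy nyz nxz : ℕ) (pxy pyz pxz : ℕ → V),
    IsGeodesicSeg G nxy pxy → pxy 0 = x → pxy nxy = y →
    IsGeodesicSeg G nyz pyz → pyz 0 = y → pyz nyz = z →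
    IsGeodesicSeg G nxz pxz → pxz 0 = x → pxz nxz = z →
    ∀ i ≤ nxz, ∃ j : ℕ,
      (j ≤ nxy ∧ G.dist (pxz i) (pxy j) ≤ δ) ∨
      (j ≤ nyz ∧ G.dist (pxz i) (pyz j) ≤ δ)

/-- Along an adjacency chain, distance is bounded by index difference. -/
lemma dist_le_of_adj_chain {V : Type*} {G : SimpleGraph V} {n : ℕ} {p : ℕ → V}
    (hadj : ∀ i < n, G.Adj (p i) (p (i + 1)))
    (hG : G.Connected) :
    ∀ i j : ℕ, i ≤ j → j ≤ n → G.dist (p i) (p j) ≤ j - i := by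
  have key : ∀ k i : ℕ, i + k ≤ n → G.dist (p i) (p (i + k)) ≤ k := by
    intro k
    induction k with
    | zero => simp [SimpleGraph.dist_self]
    | succ k ih =>
      intro i hik
      have h1 : G.dist (p (i + k)) (p (i + k + 1)) = 1 :=
        SimpleGraph.dist_eq_one_iff_adj.mpr (hadj (i + k) (by omega))
      have t := hG.dist_triangle (u := p i) (v := p (i + k)) (w := p (i + k + 1))
      have h2 := ih i (by omega)
      have : i + (k + 1) = i + k + 1 := by omega
      rw [this]
      omega
  intro i j hij hjn
  have := key (j - i) i (by omega)
  have hj : i + (j - i) = j := by omega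
  rw [hj] at this
  exact this

/-- A chain with endpoint distance `n` is a geodesic segment. -/
lemma isGeodesicSeg_of_chain {V : Type*} {G : SimpleGraph V} {n : ℕ} {p : ℕ → V}
    (hadj : ∀ i < n, G.Adj (p i) (p (i + 1)))
    (hG : G.Connected)
    (hend : G.dist (p 0) (p n) = n) :
    IsGeodesicSeg G n p := by
  refine ⟨hadj, fun i j hij hjn => ?_⟩
  have hle := dist_le_of_adj_chain hadj hG i j hij hjn
  have h1 := dist_le_of_adj_chain hadj hG 0 i (by omega) (by omega)
  have h2 := dist_le_of_adj_chain hadj hG j n hjn le_rfl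
  have t1 := hG.dist_triangle (u := p 0) (v := p i) (w := p n)
  have t2 := hG.dist_triangle (u := p i) (v := p j) (w := p n)
  omega

/-- Fellow-traveling of geodesic rays in a `δ`-hyperbolic graph: two geodesic
rays based at the same point that stay at bounded distance stay within `2δ`. -/
theorem rays_fellow_travel {V : Type*} (G : SimpleGraph V)
    (hconn : G.Preconnected) (δ : ℕ) (hδ : ThinTriangles G δ)
    (o : V) (r s : ℕ → V)
    (hradj : ∀ n, G.Adj (r n) (r (n + 1)))
    (hrdist : ∀ n, G.dist o (r n) = G.dist o (r 0) + n)
    (hsadj : ∀ n, G.Adj (s n) (s (n + 1)))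
    (hsdist : ∀ n, G.dist o (s n) = G.dist o (s 0) + n)
    (hbase : G.dist o (r 0) = G.dist o (s 0))
    (hr0 : r 0 = o) (hs0 : s 0 = o)
    (K : ℕ) (hK : ∀ n, G.dist (r n) (s n) ≤ K) :
    ∀ n, G.dist (r n) (s n) ≤ 2 * δ := by
  have : Nonempty V := ⟨o⟩
  have hG : G.Connected := ⟨hconn⟩
  have hr0' : G.dist o (r 0) = 0 := by rw [hr0, SimpleGraph.dist_self]
  have hs0' : G.dist o (s 0) = 0 := by rw [hs0, SimpleGraph.dist_self]
  have hrd : ∀ n, G.dist o (r n) = n := fun n => by rw [hrdist n, hr0']; omega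
  have hsd : ∀ n, G.dist o (s n) = n := fun n => by rw [hsdist n, hs0']; omega
  intro n
  set m := n + K + δ + 1 with hm
  -- geodesic segments for r and s up to m
  have hrseg : IsGeodesicSeg G m r := by
    refine isGeodesicSeg_of_chain (fun i _ => hradj i) hG ?_
    rw [hr0, hrd]
  have hsseg : IsGeodesicSeg G m s := by
    refine isGeodesicSeg_of_chain (fun i _ => hsadj i) hG ?_
    rw [hs0, hsd]
  -- geodesic from s m to r m
  obtain ⟨w, hw⟩ := (hG (s m) (r m)).exists_walk_length_eq_dist
  set L := G.dist (s m) (r m) with hL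
  have hLK : L ≤ K := by rw [hL, SimpleGraph.dist_comm]; exact hK m
  have hwadj : ∀ i < L, G.Adj (w.getVert i) (w.getVert (i + 1)) := by
    intro i hi
    exact w.adj_getVert_succ (by omega)
  have hwseg : IsGeodesicSeg G L w.getVert := by
    refine isGeodesicSeg_of_chain hwadj hG ?_
    rw [w.getVert_zero, ← hw, w.getVert_length]
    exact hw.symm
  obtain ⟨j, hj⟩ := hδ o (s m) (r m) m L m s w.getVert r
    hsseg hs0 rfl hwseg w.getVert_zero (by rw [← hw, w.getVert_length])
    hrseg hr0 rfl n (by omega)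
  rcases hj with ⟨hjm, hd⟩ | ⟨hjL, hd⟩
  · -- close to s j : then |j - n| ≤ δ
    have t1 := hG.dist_triangle (u := o) (v := r n) (w := s j)
    have t2 := hG.dist_triangle (u := o) (v := s j) (w := r n)
    rw [hrd] at t1
    rw [hsd] at t1 t2
    rw [hrd, SimpleGraph.dist_comm (u := s j)] at t2
    -- so |j - n| ≤ δ
    have hjn : j ≤ n + δ ∧ n ≤ j + δ := by omega
    have hds : G.dist (s j) (s n) ≤ δ := by
      rcases le_total j n with h | h
      · have := hsseg.2 j n h (by omega)
        omega
      · have := hsseg.2 n j h (by omega)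
        rw [SimpleGraph.dist_comm]
        omega
    have := hG.dist_triangle (u := r n) (v := s j) (w := s n)
    omega
  · -- close to the short side : contradiction with m large
    exfalso
    have hseg := hwseg.2 j L hjL le_rfl
    have hvL : w.getVert L = r m := by rw [← hw, w.getVert_length]
    have hgL : G.dist o (w.getVert L) = m := by rw [hvL]; exact hrd m
    have t1 := hG.dist_triangle (u := o) (v := w.getVert j) (w := w.getVert L)
    have t2 := hG.dist_triangle (u := o) (v := r n) (w := w.getVert j)
    rw [hrd] at t2
    have hd' : G.dist (w.getVert j) (r n) ≤ δ := by
      rw [SimpleGraph.dist_comm]; exact hd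
    omega
end

section
/- Let G be a word hyperbolic group whose Cayley graph with respect to the finite generating set S is δ-hyperbolic, and suppose the function g ↦ N_g (recording ‖gh‖ − ‖g‖ for all h with ‖h‖ ≤ 2δ) satisfies: N_g determines the cone type of g. Then G has only finitely many cone types, where the cone type of g is the set {h ∈ G : ‖gh‖ = ‖g‖ + ‖h‖}. -/
/-- Word length of `g` with respect to the generating set `S`. -/
noncomputable def wordLength {G : Type*} [Group G] (S : Set G) (g : G) : ℕ :=
  sInf {n | ∃ w : List G, (∀ x ∈ w, x ∈ S) ∧ w.length = n ∧ w.prod = g}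

/-- The cone type of `g`: those `h` with `‖gh‖ = ‖g‖ + ‖h‖`. -/
def coneType {G : Type*} [Group G] (S : Set G) (g : G) : Set G :=
  {h : G | wordLength S (g * h) = wordLength S g + wordLength S h}

section aux

variable {G : Type*} [Group G] {S : Set G}

lemma wl_nonempty (hsymm : S⁻¹ = S) (hgen : Subgroup.closure S = ⊤) (g : G) :
    {n | ∃ w : List G, (∀ x ∈ w, x ∈ S) ∧ w.length = n ∧ w.prod = g}.Nonempty := by
  have hg : g ∈ (Subgroup.closure S).toSubmonoid := by
    rw [hgen]; trivial
  rw [Subgroup.closure_toSubmonoid, hsymm, Set.union_self] at hg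
  obtain ⟨l, hl, hlp⟩ := Submonoid.exists_list_of_mem_closure hg
  exact ⟨l.length, l, hl, rfl, hlp⟩

lemma wl_spec (hsymm : S⁻¹ = S) (hgen : Subgroup.closure S = ⊤) (g : G) :
    ∃ w : List G, (∀ x ∈ w, x ∈ S) ∧ w.length = wordLength S g ∧ w.prod = g :=
  Nat.sInf_mem (wl_nonempty hsymm hgen g)

lemma wl_le {g : G} (w : List G) (hw : ∀ x ∈ w, x ∈ S) (hp : w.prod = g) :
    wordLength S g ≤ w.length :=
  Nat.sInf_le ⟨w, hw, rfl, hp⟩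

lemma wl_triangle (hsymm : S⁻¹ = S) (hgen : Subgroup.closure S = ⊤) (g h : G) :
    wordLength S (g * h) ≤ wordLength S g + wordLength S h := by
  obtain ⟨w, hw, hwl, hwp⟩ := wl_spec hsymm hgen g
  obtain ⟨v, hv, hvl, hvp⟩ := wl_spec hsymm hgen h
  have := wl_le (S := S) (g := g * h) (w ++ v)
    (by intro x hx; rcases List.mem_append.1 hx with h' | h'
        exacts [hw x h', hv x h']) (by simp [hwp, hvp])
  simpa [hwl, hvl] using this

lemma wl_inv_le (hsymm : S⁻¹ = S) (hgen : Subgroup.closure S = ⊤) (g : G) :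
    wordLength S g⁻¹ ≤ wordLength S g := by
  obtain ⟨w, hw, hwl, hwp⟩ := wl_spec hsymm hgen g
  have hentries : ∀ x ∈ (w.map fun y => y⁻¹).reverse, x ∈ S := by
    intro x hx
    simp only [List.mem_reverse, List.mem_map] at hx
    obtain ⟨y, hy, rfl⟩ := hx
    rw [← hsymm]
    simpa using hw y hy
  have := wl_le (S := S) (w.map fun y => y⁻¹).reverse hentries
    (by rw [← List.prod_inv_reverse, hwp])
  simpa [hwl] using this

lemma wl_inv (hsymm : S⁻¹ = S) (hgen : Subgroup.closure S = ⊤) (g : G) :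
    wordLength S g⁻¹ = wordLength S g :=
  le_antisymm (wl_inv_le hsymm hgen g) (by simpa using wl_inv_le hsymm hgen g⁻¹)

lemma wl_lower (hsymm : S⁻¹ = S) (hgen : Subgroup.closure S = ⊤) (g h : G) :
    wordLength S g ≤ wordLength S (g * h) + wordLength S h := by
  have := wl_triangle hsymm hgen (g * h) h⁻¹
  rw [mul_inv_cancel_right, wl_inv hsymm hgen] at this
  exact this

lemma ball_finite (hSfin : S.Finite) (hsymm : S⁻¹ = S) (hgen : Subgroup.closure S = ⊤)
    (n : ℕ) : {h : G | wordLength S h ≤ n}.Finite := by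
  have : Finite ↥S := hSfin
  have : {h : G | wordLength S h ≤ n} ⊆
      (fun l : List ↥S => (l.map Subtype.val).prod) '' {l : List ↥S | l.length ≤ n} := by
    intro g hg
    obtain ⟨w, hw, hwl, hwp⟩ := wl_spec hsymm hgen g
    refine ⟨w.pmap (fun x hx => (⟨x, hx⟩ : ↥S)) hw, ?_, ?_⟩
    · simpa [List.length_pmap, hwl] using hg
    · simp [List.map_pmap, List.pmap_eq_map, hwp]
  exact Set.Finite.subset ((List.finite_length_le ↥S n).image _) this

end aux

/-- If the decoration `N_g` (recording `‖gh‖ − ‖g‖` for all `h` with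
`‖h‖ ≤ 2δ`) determines the cone type of `g`, then there are only finitely many
cone types. -/
theorem finitely_many_cone_types (G : Type*) [Group G] (S : Set G)
    (hSfin : S.Finite) (hsymm : S⁻¹ = S) (hgen : Subgroup.closure S = ⊤)
    (δ : ℕ)
    (hdet : ∀ g g' : G,
      (∀ h : G, wordLength S h ≤ 2 * δ →
        (wordLength S (g * h) : ℤ) - (wordLength S g : ℤ) =
          (wordLength S (g' * h) : ℤ) - (wordLength S g' : ℤ)) →
      coneType S g = coneType S g') :
    (Set.range (coneType S)).Finite := by
  have hB : Finite ↥{h : G | wordLength S h ≤ 2 * δ} :=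
    (ball_finite hSfin hsymm hgen (2 * δ)).to_subtype
  set B := {h : G | wordLength S h ≤ 2 * δ}
  set T := Set.Icc (-(2 * δ : ℤ)) (2 * δ : ℤ) with hT
  have hTfin : Finite ↥T := (Set.finite_Icc _ _).to_subtype
  have hmemT : ∀ (g : G) (h : ↥B),
      ((wordLength S (g * h.1) : ℤ) - (wordLength S g : ℤ)) ∈ T := by
    rintro g ⟨h, hh⟩
    dsimp only
    have h1 : wordLength S (g * h) ≤ wordLength S g + wordLength S h :=
      wl_triangle hsymm hgen g h
    have h2 : wordLength S g ≤ wordLength S (g * h) + wordLength S h :=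
      wl_lower hsymm hgen g h
    have hh' : (wordLength S h : ℤ) ≤ 2 * δ := by exact_mod_cast hh
    constructor
    · have : (wordLength S g : ℤ) - wordLength S h ≤ wordLength S (g * h) := by
        have := (Int.ofNat_le.2 h2); push_cast at this ⊢; omega
      omega
    · have : (wordLength S (g * h) : ℤ) ≤ wordLength S g + wordLength S h := by
        exact_mod_cast h1
      omega
  set F : G → (↥B → ↥T) :=
    fun g h => ⟨(wordLength S (g * h.1) : ℤ) - (wordLength S g : ℤ), hmemT g h⟩ with hF
  have key : ∀ g : G, coneType S g = coneType S (Function.invFun F (F g)) := by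
    intro g
    have hFg : F (Function.invFun F (F g)) = F g :=
      Function.invFun_eq ⟨g, rfl⟩
    refine hdet g _ fun h hh => ?_
    have := congrFun hFg ⟨h, hh⟩
    exact (congrArg Subtype.val this).symm
  have hsub : Set.range (coneType S) ⊆ Set.range (coneType S ∘ Function.invFun F) := by
    rintro _ ⟨g, rfl⟩
    exact ⟨F g, (key g).symm⟩
  exact (Set.finite_range _).subset hsub
end

section
/- Let G = ⟨S⟩ be a finitely generated group and let G act on itself by left translation. Suppose G contains an infinite, finitely generated subgroup H. Then the right coset partition of G yields a free action of H on G by piecewise right-translations; in particular the restriction of any subshift of finite type over G to H-orbits is again a subshift of finite type over H, and hence if H has undecidable domino problem then so does G. -/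
/-- A tileset `(m, Θ)` (colours `{0,…,m-1}`, dominoes `Θ`) tiles the Cayley
graph of `G` with respect to the generating tuple `Sf`. -/
def Tileable {G : Type*} [Group G] {s : ℕ} (Sf : Fin s → G)
    (m : ℕ) (Θ : List (ℕ × ℕ × ℕ)) : Prop :=
  ∃ a : G → ℕ, (∀ g : G, a g < m) ∧
    ∀ (g : G) (i : Fin s), (a g, (i : ℕ), a (g * Sf i)) ∈ Θ

/-- Decidability of the domino problem of `G` with respect to `Sf`: a
computable function deciding, given a tileset, whether it tiles `G`. -/
def DominoDecidable {G : Type*} [Group G] {s : ℕ} (Sf : Fin s → G) : Prop :=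
  ∃ f : ℕ × List (ℕ × ℕ × ℕ) → Bool, Computable f ∧
    ∀ T : ℕ × List (ℕ × ℕ × ℕ), f T = true ↔ Tileable Sf T.1 T.2

namespace DominoAux

/-! ### Generic primrec helpers -/

lemma primrec_pow_const (k : ℕ) : Primrec fun m : ℕ => m ^ k := by
  induction k with
  | zero => simpa using Primrec.const 1
  | succ k ih => simpa [pow_succ] using Primrec.nat_mul.comp ih Primrec.id

lemma primrecPred_true {α : Type*} [Primcodable α] : PrimrecPred fun _ : α => True := by
  unfold PrimrecPred
  simpa using Primrec.const true

lemma primrecPred_ball {α : Type*} [Primcodable α] (P : ℕ → α → Prop)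
    [∀ q, DecidablePred (P q)] (h : ∀ q, PrimrecPred (P q)) (n : ℕ) :
    PrimrecPred fun x => ∀ q < n, P q x := by
  induction n with
  | zero => exact primrecPred_true.of_eq (by simp)
  | succ n ih => exact (ih.and (h n)).of_eq fun a => Nat.forall_lt_succ_right.symm

lemma primrecPred_imp {α : Type*} [Primcodable α] {p q : α → Prop} [DecidablePred p]
    [DecidablePred q] (hp : PrimrecPred p) (hq : PrimrecPred q) :
    PrimrecPred fun a => p a → q a :=
  (hp.not.or hq).of_eq fun a => by tauto

lemma primrec_mem {α : Type*} [Primcodable α] [DecidableEq α]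
    [∀ p : α × List α, Decidable (p.1 ∈ p.2)] :
    PrimrecPred fun p : α × List α => p.1 ∈ p.2 := by
  have h : PrimrecPred fun p : α × List α => List.idxOf p.1 p.2 < p.2.length :=
    Primrec.nat_lt.comp (Primrec.list_idxOf.comp Primrec.fst Primrec.snd)
      (Primrec.list_length.comp Primrec.snd)
  exact h.of_eq fun p => List.idxOf_lt_length_iff


variable {s t : ℕ}

def Bc (W : Fin t → List (Fin s × Bool)) : ℕ :=
  (Finset.univ.sup fun j : Fin t => (W j).length) + 1

def Kc (W : Fin t → List (Fin s × Bool)) : ℕ := t * Bc W + 1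

def Wn (W : Fin t → List (Fin s × Bool)) (j : ℕ) : List (ℕ × Bool) :=
  if h : j < t then (W ⟨j, h⟩).map (fun u => ((u.1 : ℕ), u.2)) else []

def dig (m c q : ℕ) : ℕ := c / m ^ q % m

abbrev Valid (W : Fin t → List (Fin s × Bool)) (m : ℕ) (Θ : List (ℕ × ℕ × ℕ))
    (d : ℕ × ℕ × ℕ) : Prop :=
  ∀ j < t,
    (∀ k < (Wn W j).length,
      ((Wn W j).getD k (0, false) = (d.2.1, false) →
        dig m d.2.2 (j * Bc W + k + 1) = dig m d.1 (j * Bc W + k)) ∧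
      ((Wn W j).getD k (0, false) = (d.2.1, true) →
        dig m d.1 (j * Bc W + k + 1) = dig m d.2.2 (j * Bc W + k))) ∧
    dig m d.1 (j * Bc W) = dig m d.1 (t * Bc W) ∧
    (dig m d.1 (j * Bc W + (Wn W j).length), j, dig m d.1 (t * Bc W)) ∈ Θ

def tripleList (s M : ℕ) : List (ℕ × ℕ × ℕ) :=
  (List.range M).flatMap fun a =>
    (List.range s).flatMap fun i => (List.range M).map fun b => (a, i, b)

def encodeTiles (W : Fin t → List (Fin s × Bool)) (T : ℕ × List (ℕ × ℕ × ℕ)) :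
    ℕ × List (ℕ × ℕ × ℕ) :=
  (T.1 ^ Kc W,
    (tripleList s (T.1 ^ Kc W)).flatMap fun d => if Valid W T.1 T.2 d then [d] else [])

lemma mem_tripleList {s M : ℕ} {d : ℕ × ℕ × ℕ} :
    d ∈ tripleList s M ↔ d.1 < M ∧ d.2.1 < s ∧ d.2.2 < M := by
  obtain ⟨a, i, b⟩ := d
  simp only [tripleList, List.mem_flatMap, List.mem_map, List.mem_range, Prod.mk.injEq]
  constructor
  · rintro ⟨a', ha, i', hi, b', hb, rfl, rfl, rfl⟩
    exact ⟨ha, hi, hb⟩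
  · rintro ⟨ha, hi, hb⟩
    exact ⟨a, ha, i, hi, b, hb, rfl, rfl, rfl⟩

lemma mem_encodeTiles {W : Fin t → List (Fin s × Bool)} {T : ℕ × List (ℕ × ℕ × ℕ)}
    {d : ℕ × ℕ × ℕ} :
    d ∈ (encodeTiles W T).2 ↔ d ∈ tripleList s (T.1 ^ Kc W) ∧ Valid W T.1 T.2 d := by
  simp only [encodeTiles, List.mem_flatMap]
  constructor
  · rintro ⟨e, he, hd⟩
    by_cases h : Valid W T.1 T.2 e
    · rw [if_pos h, List.mem_singleton] at hd
      subst hd; exact ⟨he, h⟩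
    · rw [if_neg h] at hd
      simp at hd
  · intro ⟨hd, hv⟩
    exact ⟨d, hd, by rw [if_pos hv]; exact List.mem_singleton.mpr rfl⟩

/-! ### Primrec of the encoding -/

section PR
open Primrec

lemma primrec_dig (q : ℕ) : Primrec fun p : ℕ × ℕ => dig p.1 p.2 q := by
  unfold dig
  exact nat_mod.comp (nat_div.comp snd ((primrec_pow_const q).comp fst)) fst

lemma primrec_tripleList : Primrec fun M => tripleList s M := by
  unfold tripleList
  apply list_flatMap list_range
  have h3 : Primrec fun r : ((ℕ × ℕ) × ℕ) × ℕ => ((r.1.1.2, r.1.2, r.2) : ℕ × ℕ × ℕ) :=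
    pair (snd.comp (fst.comp fst)) (pair (snd.comp fst) snd)
  have h2 : Primrec fun q : (ℕ × ℕ) × ℕ =>
      (List.range q.1.1).map fun b => ((q.1.2, q.2, b) : ℕ × ℕ × ℕ) :=
    list_map (list_range.comp (fst.comp fst)) h3.to₂
  have h1 : Primrec fun p : ℕ × ℕ =>
      (List.range s).flatMap fun i => (List.range p.1).map fun b => ((p.2, i, b) : ℕ × ℕ × ℕ) :=
    list_flatMap (const (List.range s)) h2.to₂
  exact h1.to₂

lemma primrec_valid (W : Fin t → List (Fin s × Bool)) :
    PrimrecPred fun x : (ℕ × List (ℕ × ℕ × ℕ)) × (ℕ × ℕ × ℕ) =>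
      Valid W x.1.1 x.1.2 x.2 := by
  unfold Valid
  apply primrecPred_ball
  intro j
  apply PrimrecPred.and
  · apply primrecPred_ball
    intro k
    have hd1 : Primrec fun x : (ℕ × List (ℕ × ℕ × ℕ)) × (ℕ × ℕ × ℕ) => x.2.1 :=
      fst.comp snd
    have hd21 : Primrec fun x : (ℕ × List (ℕ × ℕ × ℕ)) × (ℕ × ℕ × ℕ) => x.2.2.1 :=
      fst.comp (snd.comp snd)
    have hd22 : Primrec fun x : (ℕ × List (ℕ × ℕ × ℕ)) × (ℕ × ℕ × ℕ) => x.2.2.2 :=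
      snd.comp (snd.comp snd)
    have hm : Primrec fun x : (ℕ × List (ℕ × ℕ × ℕ)) × (ℕ × ℕ × ℕ) => x.1.1 :=
      fst.comp fst
    have heq : ∀ (b : Bool), PrimrecPred fun x : (ℕ × List (ℕ × ℕ × ℕ)) × (ℕ × ℕ × ℕ) =>
        (Wn W j).getD k (0, false) = (x.2.2.1, b) := by
      intro b
      exact Primrec.eq.comp (const _) (pair hd21 (const b))
    apply PrimrecPred.and
    · apply primrecPred_imp (heq false)
      exact Primrec.eq.comp ((primrec_dig _).comp (pair hm hd22))
        ((primrec_dig _).comp (pair hm hd1))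
    · apply primrecPred_imp (heq true)
      exact Primrec.eq.comp ((primrec_dig _).comp (pair hm hd1))
        ((primrec_dig _).comp (pair hm hd22))
  · have hd1 : Primrec fun x : (ℕ × List (ℕ × ℕ × ℕ)) × (ℕ × ℕ × ℕ) => x.2.1 :=
      fst.comp snd
    have hm : Primrec fun x : (ℕ × List (ℕ × ℕ × ℕ)) × (ℕ × ℕ × ℕ) => x.1.1 :=
      fst.comp fst
    apply PrimrecPred.and
    · exact Primrec.eq.comp ((primrec_dig _).comp (pair hm hd1))
        ((primrec_dig _).comp (pair hm hd1))
    · have h := PrimrecPred.comp primrec_mem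
        (pair (pair ((primrec_dig (j * Bc W + (Wn W j).length)).comp (pair hm hd1))
          (pair (const j) ((primrec_dig (t * Bc W)).comp (pair hm hd1))))
          (snd.comp fst))
      exact h.of_eq fun a => Iff.rfl

lemma primrec_encodeTiles (W : Fin t → List (Fin s × Bool)) :
    Primrec (encodeTiles W) := by
  unfold encodeTiles
  have hM : Primrec fun T : ℕ × List (ℕ × ℕ × ℕ) => T.1 ^ Kc W :=
    (primrec_pow_const (Kc W)).comp fst
  apply pair hM
  have h : Primrec fun p : (ℕ × List (ℕ × ℕ × ℕ)) × (ℕ × ℕ × ℕ) =>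
      if Valid W p.1.1 p.1.2 p.2 then [p.2] else [] :=
    Primrec.ite (primrec_valid W) (list_cons.comp snd (const [])) (const [])
  exact list_flatMap (primrec_tripleList.comp hM) h.to₂

end PR

/-! ### Digit lemmas -/

lemma dig_ofDigits (m : ℕ) (l : List ℕ) (hl : ∀ x ∈ l, x < m) (q : ℕ) :
    dig m (Nat.ofDigits m l) q = l.getD q 0 := by
  induction l generalizing q with
  | nil => simp [dig, Nat.ofDigits_nil]
  | cons d l ih =>
    have hd : d < m := hl d List.mem_cons_self
    have hm : 0 < m := Nat.pos_of_ne_zero fun h => by omega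
    cases q with
    | zero =>
      simp only [dig, pow_zero, Nat.div_one, Nat.ofDigits_cons, List.getD_cons_zero]
      rw [Nat.add_mul_mod_self_left, Nat.mod_eq_of_lt hd]
    | succ q =>
      have : dig m (Nat.ofDigits m (d :: l)) (q + 1) = dig m (Nat.ofDigits m l) q := by
        simp only [dig, Nat.ofDigits_cons]
        rw [pow_succ', ← Nat.div_div_eq_div_mul, Nat.add_mul_div_left _ _ hm,
          Nat.div_eq_of_lt hd, Nat.zero_add]
      rw [this, ih (fun x hx => hl x (List.mem_cons_of_mem _ hx)), List.getD_cons_succ]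

lemma ofDigits_lt (m : ℕ) (hm : 0 < m) (l : List ℕ) (hl : ∀ x ∈ l, x < m) :
    Nat.ofDigits m l < m ^ l.length := by
  induction l with
  | nil => simpa [Nat.ofDigits_nil] using Nat.one_pos.trans_le (Nat.one_le_iff_ne_zero.mpr (by positivity))
  | cons d l ih =>
    have hd : d < m := hl d List.mem_cons_self
    have ih' := ih (fun x hx => hl x (List.mem_cons_of_mem _ hx))
    calc Nat.ofDigits m (d :: l) = d + m * Nat.ofDigits m l := Nat.ofDigits_cons
    _ < m + m * Nat.ofDigits m l := by omega
    _ = m * (Nat.ofDigits m l + 1) := by ring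
    _ ≤ m * m ^ l.length := Nat.mul_le_mul_left m (Nat.succ_le_of_lt ih')
    _ = m ^ (d :: l).length := by rw [List.length_cons, pow_succ']

lemma getD_ofFn {n : ℕ} (f : Fin n → ℕ) (q : ℕ) :
    (List.ofFn f).getD q 0 = if h : q < n then f ⟨q, h⟩ else 0 := by
  rw [List.getD, List.getElem?_ofFn]
  split <;> simp

/-! ### Words in the generators -/

section Words
variable {G : Type*} [Group G]

def letterVal (Sf : Fin s → G) (u : Fin s × Bool) : G :=
  if u.2 then (Sf u.1)⁻¹ else Sf u.1

def wordVal (Sf : Fin s → G) (w : List (Fin s × Bool)) : G :=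
  (w.map (letterVal Sf)).prod

variable (Sf : Fin s → G)

lemma letterVal_flip (u : Fin s × Bool) :
    letterVal Sf (u.1, !u.2) = (letterVal Sf u)⁻¹ := by
  obtain ⟨i, b⟩ := u; cases b <;> simp [letterVal]

lemma wordVal_revflip (w : List (Fin s × Bool)) :
    wordVal Sf ((w.map fun u => (u.1, !u.2)).reverse) = (wordVal Sf w)⁻¹ := by
  induction w with
  | nil => simp [wordVal]
  | cons u w ih =>
    simp only [wordVal, List.map_cons, List.reverse_cons, List.map_append, List.prod_append,
      List.map_cons, List.prod_cons, List.map_nil, List.prod_nil, mul_one, mul_inv_rev]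
    rw [show ((w.map fun u => (u.1, !u.2)).reverse.map (letterVal Sf)).prod
        = wordVal Sf ((w.map fun u => (u.1, !u.2)).reverse) from rfl, ih]
    rw [letterVal_flip]
    rfl

lemma exists_word (x : G) (hx : x ∈ Subgroup.closure (Set.range Sf)) :
    ∃ w : List (Fin s × Bool), wordVal Sf w = x := by
  induction hx using Subgroup.closure_induction with
  | mem x hx =>
    obtain ⟨i, rfl⟩ := hx
    exact ⟨[(i, false)], by simp [wordVal, letterVal]⟩
  | one => exact ⟨[], by simp [wordVal]⟩
  | mul x y _ _ hx hy =>
    obtain ⟨w1, rfl⟩ := hx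
    obtain ⟨w2, rfl⟩ := hy
    exact ⟨w1 ++ w2, by simp [wordVal]⟩
  | inv x _ hx =>
    obtain ⟨w, rfl⟩ := hx
    exact ⟨(w.map fun u => (u.1, !u.2)).reverse, wordVal_revflip Sf w⟩

variable (W : Fin t → List (Fin s × Bool))

def pref (j k : ℕ) : G :=
  if h : j < t then wordVal Sf ((W ⟨j, h⟩).take k) else 1

def pe (q : ℕ) : G := pref Sf W (q / Bc W) (q % Bc W)

lemma len_lt_Bc (j : Fin t) : (W j).length < Bc W :=
  Nat.lt_succ_of_le (Finset.le_sup (f := fun j => (W j).length) (Finset.mem_univ j))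

lemma Bc_pos : 0 < Bc W := Nat.succ_pos _

lemma pe_eq {j k : ℕ} (hj : j < t) (hk : k < Bc W) :
    pe Sf W (j * Bc W + k) = pref Sf W j k := by
  have h1 : j * Bc W + k = k + Bc W * j := by ring
  rw [pe, h1, Nat.add_mul_div_left _ _ (Bc_pos W), Nat.add_mul_mod_self_left,
    Nat.div_eq_of_lt hk, Nat.zero_add, Nat.mod_eq_of_lt hk]

lemma pe_master : pe Sf W (t * Bc W) = 1 := by
  have h1 : t * Bc W = 0 + Bc W * t := by ring
  rw [pe, h1, Nat.add_mul_div_left _ _ (Bc_pos W), Nat.add_mul_mod_self_left]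
  simp [pref]

lemma pref_zero (j : ℕ) : pref Sf W j 0 = 1 := by
  unfold pref
  split <;> simp [wordVal]

lemma pref_succ (j : Fin t) {k : ℕ} (hk : k < (W j).length) :
    pref Sf W j (k + 1) = pref Sf W j k * letterVal Sf ((W j).get ⟨k, hk⟩) := by
  have hj : (j : ℕ) < t := j.isLt
  simp only [pref, dif_pos hj, Fin.eta]
  unfold wordVal
  rw [List.map_take, List.map_take, List.prod_take_succ _ _ (by simpa using hk)]
  congr 1
  simp [List.getElem_map, List.get]

lemma pref_len (j : Fin t) : pref Sf W j (W j).length = wordVal Sf (W j) := by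
  have hj : (j : ℕ) < t := j.isLt
  simp only [pref, dif_pos hj, Fin.eta, List.take_length]

lemma jBk_lt_Kc {j k : ℕ} (hj : j < t) (hk : k < Bc W) : j * Bc W + k < Kc W := by
  have h1 : (j + 1) * Bc W ≤ t * Bc W := Nat.mul_le_mul_right _ hj
  rw [Nat.succ_mul] at h1
  unfold Kc
  omega

lemma tB_lt_Kc : t * Bc W < Kc W := Nat.lt_succ_self _

end Words

/-! ### Direction A: a tiling of `H` yields a tiling of `G` -/

section Main
variable {G : Type*} [Group G] (Sf : Fin s → G) (H : Subgroup G) (Tf : Fin t → H)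
  (W : Fin t → List (Fin s × Bool))

/-- The `H`-component of `g` with respect to a fixed transversal. -/
noncomputable def phi (g : G) : H :=
  ⟨(Quotient.out (QuotientGroup.mk g : G ⧸ H))⁻¹ * g, by
    have h1 : (QuotientGroup.mk (Quotient.out (QuotientGroup.mk g : G ⧸ H)) : G ⧸ H)
        = QuotientGroup.mk g := QuotientGroup.out_eq' _
    exact (QuotientGroup.eq).mp h1⟩

lemma phi_mul (g : G) (h : H) : phi H (g * h) = phi H g * h := by
  have hq : (QuotientGroup.mk (g * h) : G ⧸ H) = QuotientGroup.mk g := by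
    symm
    exact (QuotientGroup.eq).mpr (by simpa using h.2)
  apply Subtype.ext
  simp only [phi, hq, Subgroup.coe_mul, mul_assoc]

lemma tileable_encode_of_tileable
    (hW : ∀ j, wordVal Sf (W j) = ((Tf j : H) : G))
    (m : ℕ) (Θ : List (ℕ × ℕ × ℕ)) (h : Tileable Tf m Θ) :
    Tileable Sf (encodeTiles W (m, Θ)).1 (encodeTiles W (m, Θ)).2 := by
  obtain ⟨a, ham, hcon⟩ := h
  have hm : 0 < m := (Nat.zero_le _).trans_lt (ham 1)
  set ab : G → ℕ := fun g => a (phi H g) with hab_def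
  have hab_lt : ∀ g, ab g < m := fun g => ham _
  have hab : ∀ (g : G) (j : Fin t), (ab g, (j : ℕ), ab (g * ((Tf j : H) : G))) ∈ Θ := by
    intro g j
    have h1 := hcon (phi H g) j
    have h2 : phi H (g * ((Tf j : H) : G)) = phi H g * Tf j := phi_mul H g (Tf j)
    simpa [hab_def, h2] using h1
  set col : G → ℕ :=
    fun g => Nat.ofDigits m (List.ofFn fun q : Fin (Kc W) => ab (g * (pe Sf W q)⁻¹)) with hcol
  have hbound : ∀ g, col g < m ^ Kc W := by
    intro g
    have h2 := ofDigits_lt m hm (List.ofFn fun q : Fin (Kc W) => ab (g * (pe Sf W q)⁻¹))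
      (by intro x hx; obtain ⟨q, rfl⟩ := List.mem_ofFn.mp hx; exact hab_lt _)
    rwa [List.length_ofFn] at h2
  have hdig : ∀ (g : G) (q : ℕ), q < Kc W →
      dig m (col g) q = ab (g * (pe Sf W q)⁻¹) := by
    intro g q hq
    rw [hcol, dig_ofDigits m _ (by
      intro x hx
      obtain ⟨i, rfl⟩ := List.mem_ofFn.mp hx
      exact hab_lt _), getD_ofFn, dif_pos hq]
  refine ⟨col, hbound, ?_⟩
  intro g i
  have hmem : ((col g, (i : ℕ), col (g * Sf i)) : ℕ × ℕ × ℕ)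
      ∈ (encodeTiles W (m, Θ)).2 := by
    rw [mem_encodeTiles]
    refine ⟨mem_tripleList.mpr ⟨hbound g, i.isLt, hbound _⟩, ?_⟩
    intro j hj
    set jF : Fin t := ⟨j, hj⟩ with hjF
    have hWn : Wn W j = (W jF).map fun u => ((u.1 : ℕ), u.2) := dif_pos hj
    have hlen : (Wn W j).length = (W jF).length := by rw [hWn, List.length_map]
    refine ⟨?_, ?_, ?_⟩
    · -- edge constraints
      intro k hk
      rw [hlen] at hk
      have hgetD : (Wn W j).getD k (0, false)
          = (((((W jF).get ⟨k, hk⟩).1 : Fin s) : ℕ), ((W jF).get ⟨k, hk⟩).2) := by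
        rw [hWn, List.getD_eq_getElem _ _ (by simpa using hk), List.getElem_map]
        rfl
      set u := (W jF).get ⟨k, hk⟩ with hu
      have hk1 : k + 1 < Bc W := Nat.lt_of_le_of_lt hk (len_lt_Bc W jF)
      have hkB : k < Bc W := Nat.lt_trans (Nat.lt_succ_self k) hk1
      have hq1K : j * Bc W + k + 1 < Kc W := by
        have := jBk_lt_Kc W (k := k + 1) hj hk1
        omega
      have hq0K : j * Bc W + k < Kc W := jBk_lt_Kc W hj hkB
      have hpe1 : pe Sf W (j * Bc W + k + 1) = pref Sf W j (k + 1) := by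
        rw [Nat.add_assoc]
        exact pe_eq Sf W hj hk1
      have hpe0 : pe Sf W (j * Bc W + k) = pref Sf W j k := pe_eq Sf W hj hkB
      have hstep : pref Sf W j (k + 1) = pref Sf W j k * letterVal Sf u := by
        have := pref_succ Sf W jF hk
        exact this
      constructor
      · intro hcond
        rw [hgetD] at hcond
        have h1 : (u.1 : ℕ) = (i : ℕ) := congrArg Prod.fst hcond
        have h2 : u.2 = false := congrArg Prod.snd hcond
        have hu1 : u.1 = i := Fin.val_injective h1
        have hlv : letterVal Sf u = Sf i := by rw [letterVal, h2, if_neg (by simp), hu1]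
        show dig m (col (g * Sf i)) (j * Bc W + k + 1) = dig m (col g) (j * Bc W + k)
        rw [hdig _ _ hq1K, hdig _ _ hq0K, hpe1, hpe0, hstep, hlv]
        congr 1
        group
      · intro hcond
        rw [hgetD] at hcond
        have h1 : (u.1 : ℕ) = (i : ℕ) := congrArg Prod.fst hcond
        have h2 : u.2 = true := congrArg Prod.snd hcond
        have hu1 : u.1 = i := Fin.val_injective h1
        have hlv : letterVal Sf u = (Sf i)⁻¹ := by rw [letterVal, h2, if_pos rfl, hu1]
        show dig m (col g) (j * Bc W + k + 1) = dig m (col (g * Sf i)) (j * Bc W + k)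
        rw [hdig _ _ hq1K, hdig _ _ hq0K, hpe1, hpe0, hstep, hlv]
        congr 1
        group
    · -- master equality
      show dig m (col g) (j * Bc W) = dig m (col g) (t * Bc W)
      have h0 : j * Bc W < Kc W := by simpa using jBk_lt_Kc W hj (Bc_pos W)
      have hpe0 : pe Sf W (j * Bc W) = pref Sf W j 0 := pe_eq Sf W hj (Bc_pos W)
      rw [hdig _ _ h0, hdig _ _ (tB_lt_Kc W), hpe0, pref_zero, pe_master]
    · -- vertex membership
      rw [hlen]
      have hL : (W jF).length < Bc W := len_lt_Bc W jF
      have hqK : j * Bc W + (W jF).length < Kc W := jBk_lt_Kc W hj hL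
      have hpeL : pe Sf W (j * Bc W + (W jF).length) = ((Tf jF : H) : G) := by
        rw [pe_eq Sf W hj hL]
        have := pref_len Sf W jF
        rw [show pref Sf W j (W jF).length = pref Sf W (jF : ℕ) (W jF).length from rfl,
          this, hW jF]
      show (dig m (col g) (j * Bc W + (W jF).length), j, dig m (col g) (t * Bc W)) ∈ Θ
      rw [hdig _ _ hqK, hdig _ _ (tB_lt_Kc W), hpeL, pe_master]
      have h3 := hab (g * ((Tf jF : H) : G)⁻¹) jF
      rw [inv_mul_cancel_right] at h3
      simpa using h3
  exact hmem
end Main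

/-! ### Direction B: a tiling of `G` yields a tiling of `H` -/

section MainB
variable {G : Type*} [Group G] (Sf : Fin s → G) (H : Subgroup G) (Tf : Fin t → H)
  (W : Fin t → List (Fin s × Bool))

lemma tileable_of_tileable_encode (hs : 0 < s)
    (hW : ∀ j, wordVal Sf (W j) = ((Tf j : H) : G))
    (m : ℕ) (Θ : List (ℕ × ℕ × ℕ)) (h : Tileable Sf (encodeTiles W (m, Θ)).1 (encodeTiles W (m, Θ)).2) :
    Tileable Tf m Θ := by
  obtain ⟨c, hcb, hcc⟩ := h
  have hcb' : ∀ g : G, c g < m ^ Kc W := hcb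
  have hval : ∀ (g : G) (i : Fin s), Valid W m Θ (c g, (i : ℕ), c (g * Sf i)) :=
    fun g i => (mem_encodeTiles.mp (hcc g i)).2
  have hm : 0 < m := by
    rcases Nat.eq_zero_or_pos m with rfl | hm
    · exfalso
      have h1 := hcb' 1
      rw [zero_pow (n := Kc W) (by unfold Kc; omega)] at h1
      exact Nat.not_lt_zero _ h1
    · exact hm
  -- transport along the word for `Tf j`
  have trans : ∀ (j : Fin t) (g : G) (k : ℕ), k ≤ (W j).length →
      dig m (c (g * pref Sf W (j : ℕ) k)) ((j : ℕ) * Bc W + k)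
        = dig m (c g) ((j : ℕ) * Bc W) := by
    intro j g k
    induction k with
    | zero => intro _; rw [pref_zero, mul_one, Nat.add_zero]
    | succ k ih =>
      intro hk
      have hk' : k < (W j).length := hk
      have ihk := ih (Nat.le_of_lt hk')
      set u := (W j).get ⟨k, hk'⟩ with hu
      have hj : (j : ℕ) < t := j.isLt
      have hWn : Wn W (j : ℕ) = (W j).map fun u => ((u.1 : ℕ), u.2) := by
        rw [Wn, dif_pos hj, Fin.eta]
      have hlen : k < (Wn W (j : ℕ)).length := by rw [hWn, List.length_map]; exact hk'
      have hgetD : (Wn W (j : ℕ)).getD k (0, false) = (((u.1 : Fin s) : ℕ), u.2) := by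
        rw [hWn, List.getD_eq_getElem _ _ (by simpa using hk'), List.getElem_map]
        rfl
      have hstep : pref Sf W (j : ℕ) (k + 1) = pref Sf W (j : ℕ) k * letterVal Sf u :=
        pref_succ Sf W j hk'
      cases hb : u.2 with
      | false =>
        have hlv : letterVal Sf u = Sf u.1 := by rw [letterVal, hb, if_neg (by simp)]
        have hv := ((hval (g * pref Sf W (j : ℕ) k) u.1 (j : ℕ) hj).1 k hlen).1
          (by rw [hgetD, hb])
        simp only at hv
        rw [hstep, hlv, ← mul_assoc, ← Nat.add_assoc, hv]
        exact ihk
      | true =>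
        have hlv : letterVal Sf u = (Sf u.1)⁻¹ := by rw [letterVal, hb, if_pos rfl]
        have hcancel : g * pref Sf W (j : ℕ) (k + 1) * Sf u.1 = g * pref Sf W (j : ℕ) k := by
          rw [hstep, hlv]
          group
        have hv := ((hval (g * pref Sf W (j : ℕ) (k + 1)) u.1 (j : ℕ) hj).1 k hlen).2
          (by rw [hgetD, hb])
        simp only at hv
        rw [hcancel] at hv
        rw [← Nat.add_assoc, hv]
        exact ihk
  -- vertex constraints
  have vert : ∀ (g : G) (j : ℕ) (hj : j < t),
      dig m (c g) (j * Bc W) = dig m (c g) (t * Bc W) ∧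
      (dig m (c g) (j * Bc W + (Wn W j).length), j, dig m (c g) (t * Bc W)) ∈ Θ :=
    fun g j hj => (hval g ⟨0, hs⟩ j hj).2
  refine ⟨fun h => dig m (c (h : G)) (t * Bc W), fun h => Nat.mod_lt _ hm, ?_⟩
  intro h j
  have hj : (j : ℕ) < t := j.isLt
  have hWlen : (Wn W (j : ℕ)).length = (W j).length := by
    rw [Wn, dif_pos hj, Fin.eta, List.length_map]
  have hprefL : pref Sf W (j : ℕ) (W j).length = ((Tf j : H) : G) := by
    have := pref_len Sf W j
    rw [show pref Sf W (j : ℕ) (W j).length = pref Sf W ((j : Fin t) : ℕ) (W j).length from rfl,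
      this, hW j]
  have htrans := trans j (h : G) (W j).length le_rfl
  rw [hprefL] at htrans
  have hvg := vert ((h : G) * ((Tf j : H) : G)) (j : ℕ) hj
  have hcoe : ((h * Tf j : H) : G) = (h : G) * ((Tf j : H) : G) := rfl
  have hmem := hvg.2
  rw [hWlen, htrans, (vert (h : G) (j : ℕ) hj).1] at hmem
  rw [← hcoe] at hmem
  exact hmem

end MainB

end DominoAux

open DominoAux in
/-- If `H` is an infinite finitely generated subgroup of a finitely generated
group `G` and the domino problem of `H` is undecidable, then so is that of
`G`. -/
theorem domino_undecidable_of_subgroup {G : Type*} [Group G] {s t : ℕ}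
    (Sf : Fin s → G) (hS : Subgroup.closure (Set.range Sf) = ⊤)
    (H : Subgroup G) [Infinite H]
    (Tf : Fin t → H) (hT : Subgroup.closure (Set.range Tf) = ⊤)
    (hH : ¬ DominoDecidable Tf) :
    ¬ DominoDecidable Sf := by
  rcases Nat.eq_zero_or_pos s with hs | hs
  · -- degenerate case: `G` is trivial, contradicting `Infinite H`
    exfalso
    have hE : IsEmpty (Fin s) := by rw [hs]; infer_instance
    have h0 : Set.range Sf = ∅ := Set.range_eq_empty Sf
    rw [h0, Subgroup.closure_empty] at hS
    have hsub : Subsingleton G := by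
      constructor
      intro a b
      have ha : a ∈ (⊥ : Subgroup G) := hS ▸ Subgroup.mem_top a
      have hb : b ∈ (⊥ : Subgroup G) := hS ▸ Subgroup.mem_top b
      rw [Subgroup.mem_bot] at ha hb
      rw [ha, hb]
    obtain ⟨x, y, hxy⟩ := exists_pair_ne H
    exact hxy (Subtype.ext (Subsingleton.elim _ _))
  · intro hdec
    apply hH
    obtain ⟨f, hfc, hfS⟩ := hdec
    have hWex : ∀ j : Fin t, ∃ w : List (Fin s × Bool), wordVal Sf w = ((Tf j : H) : G) :=
      fun j => exists_word Sf _ (by rw [hS]; trivial)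
    choose W hW using hWex
    refine ⟨fun T => f (encodeTiles W T), hfc.comp (primrec_encodeTiles W).to_comp, fun T => ?_⟩
    obtain ⟨m, Θ⟩ := T
    rw [hfS]
    constructor
    · exact tileable_of_tileable_encode Sf H Tf W hs hW m Θ
    · exact tileable_encode_of_tileable Sf H Tf W hW m Θ
end
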